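/- arXiv:1807.00184 — 2 statements merged into one kernel-verified Lean document; each statement's English description precedes it below -/
import Mathlib

section
/- For α ∈ (0, 1/2), x = (x₁, x₂) with 0 ≤ x₂ ≤ x₁, the integral ∫_{(0,2x₁)×(0,x₂)} (y₂ − x₂)/|x − y|^{2+2α} dy is bounded below by −(1/α)·(1/(1−2α) − 2^{−α})·x₁^{1−2α}. -/
open Real MeasureTheory

lemma even_sq_rpow (α t : ℝ) : ((t:ℝ)^2) ^ (-α) = |t| ^ (-(2*α)) := by
  rw [← sq_abs, ← Real.rpow_natCast |t| 2, ← Real.rpow_mul (abs_nonneg t)]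
  norm_num

lemma bad_deriv (α a c t : ℝ) (hα : 0 < α) (ha : a ≠ 0) :
    HasDerivAt (fun s => -(1/(2*α)) * (a^2 + (c - s)^2) ^ (-α))
      ((t - c) / ((a^2 + (c - t)^2) ^ (1 + α))) t := by
  have hbase : 0 < a^2 + (c - t)^2 := by positivity
  have h0 : HasDerivAt (fun s : ℝ => c - s) (-1) t := (hasDerivAt_id t).const_sub c
  have h1 : HasDerivAt (fun s : ℝ => a^2 + (c - s)^2)
      ((2 : ℕ) * (c - t)^(2-1) * (-1)) t := (h0.pow 2).const_add (a^2)
  have h2 := (h1.rpow_const (p := -α) (Or.inl hbase.ne')).const_mul (-(1/(2*α)))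
  refine h2.congr_deriv ?_
  have hX : (0:ℝ) < (a^2 + (c - t)^2) ^ (1 + α) := Real.rpow_pos_of_pos hbase _
  have hrw : (a^2 + (c - t)^2) ^ (-α - 1) = ((a^2 + (c - t)^2) ^ (1 + α))⁻¹ := by
    rw [← Real.rpow_neg hbase.le]
    congr 1
    ring
  rw [hrw]
  field_simp
  ring

lemma bad_inner (α a c : ℝ) (hα : 0 < α) (ha : a ≠ 0) (hc : 0 ≤ c) :
    ∫ t in Set.Ioo (0:ℝ) c, (t - c) / ((a^2 + (c - t)^2) ^ (1 + α)) =
      (1/(2*α)) * ((a^2 + c^2) ^ (-α) - (a^2) ^ (-α)) := by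
  rw [← MeasureTheory.integral_Ioc_eq_integral_Ioo, ← intervalIntegral.integral_of_le hc]
  have hcont : ContinuousOn (fun t : ℝ => (t - c) / ((a^2 + (c - t)^2) ^ (1 + α)))
      (Set.uIcc 0 c) := by
    apply ContinuousOn.div
    · fun_prop
    · apply ContinuousOn.rpow_const (by fun_prop)
      intro x _
      left
      positivity
    · intro x _
      positivity
  rw [intervalIntegral.integral_eq_sub_of_hasDerivAt
      (fun t _ => bad_deriv α a c t hα ha) hcont.intervalIntegrable]
  norm_num
  ring

theorem bad_part_integral_lower_bound (α x₁ x₂ : ℝ)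
    (hα : α ∈ Set.Ioo (0:ℝ) (1/2)) (hx₂ : 0 ≤ x₂) (hx : x₂ ≤ x₁) (hx₁ : 0 < x₁) :
    -(1 / α) * (1 / (1 - 2 * α) - 2 ^ (-α)) * x₁ ^ (1 - 2 * α) ≤
      ∫ y in Set.Ioo (0:ℝ) (2 * x₁) ×ˢ Set.Ioo (0:ℝ) x₂,
        (y.2 - x₂) / (((x₁ - y.1) ^ 2 + (x₂ - y.2) ^ 2) ^ (1 + α)) := by
  obtain ⟨hα0, hα2⟩ := hα
  have h2α : 2*α < 1 := by linarith
  have hC : 0 ≤ (1/α) * (1/(1-2*α) - 2^(-α)) * x₁^(1-2*α) := by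
    have h1 : (2:ℝ)^(-α) ≤ 1 :=
      Real.rpow_le_one_of_one_le_of_nonpos one_le_two (by linarith)
    have h2 : (1:ℝ) ≤ 1/(1-2*α) := by
      rw [le_div_iff₀ (by linarith : (0:ℝ) < 1-2*α)]
      linarith
    exact mul_nonneg (mul_nonneg (by positivity) (by linarith)) (Real.rpow_nonneg hx₁.le _)
  by_cases hint : IntegrableOn
      (fun y : ℝ×ℝ => (y.2 - x₂) / (((x₁ - y.1) ^ 2 + (x₂ - y.2) ^ 2) ^ (1 + α)))
      (Set.Ioo (0:ℝ) (2*x₁) ×ˢ Set.Ioo (0:ℝ) x₂) volume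
  case neg =>
    rw [MeasureTheory.integral_undef hint]
    linarith
  case pos =>
  -- interval integrability of the outer function
  have hg1 : IntervalIntegrable (fun u : ℝ => (u^2) ^ (-α)) volume 0 x₁ := by
    apply (intervalIntegral.intervalIntegrable_rpow' (by linarith : (-1:ℝ) < -(2*α))).congr
    intro u hu
    rw [Set.uIoc_of_le hx₁.le] at hu
    dsimp only
    rw [even_sq_rpow, abs_of_pos hu.1]
  have hg2 : IntervalIntegrable (fun u : ℝ => (u^2) ^ (-α)) volume (-x₁) 0 := by
    rw [IntervalIntegrable.iff_comp_neg]
    simp only [neg_neg, neg_zero, neg_sq]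
    exact hg1.symm
  have hII : IntervalIntegrable (fun y => ((x₁ - y)^2) ^ (-α)) volume 0 (2*x₁) := by
    have h := (hg1.symm.trans hg2.symm).comp_sub_left x₁
    rw [two_mul]
    simpa using h
  -- value of the outer integral
  have houter : ∫ y in (0:ℝ)..(2*x₁), ((x₁ - y)^2) ^ (-α)
      = 2 * x₁^(1-2*α) / (1-2*α) := by
    rw [intervalIntegral.integral_comp_sub_left (fun t : ℝ => (t^2)^(-α)) x₁]
    rw [show x₁ - 2*x₁ = -x₁ by ring, show x₁ - 0 = x₁ by ring]
    rw [← intervalIntegral.integral_add_adjacent_intervals hg2 hg1]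
    have e1 : ∫ t in (0:ℝ)..x₁, (t^2)^(-α) = x₁ ^ (1-2*α) / (1-2*α) := by
      rw [intervalIntegral.integral_congr (g := fun t : ℝ => t ^ (-(2*α)))
        (fun t ht => by
          rw [Set.uIcc_of_le hx₁.le] at ht
          exact (even_sq_rpow α t).trans (by rw [abs_of_nonneg ht.1]))]
      rw [integral_rpow (Or.inl (by linarith))]
      rw [Real.zero_rpow (by intro h; exact absurd h (by intro h'; linarith [h'] ) : -(2*α)+1 ≠ 0)]
      rw [show -(2*α)+1 = 1-2*α by ring]
      ring
    have e2 := intervalIntegral.integral_comp_neg (a := 0) (b := x₁)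
      (fun t : ℝ => (t^2)^(-α))
    simp only [neg_sq, neg_zero] at e2
    rw [e1, ← e2, e1]
    ring
  -- set integrability of the lower bound function
  have hIoo : IntegrableOn (fun y => ((x₁ - y)^2)^(-α)) (Set.Ioo (0:ℝ) (2*x₁)) volume := by
    have h := hII.def'
    rw [Set.uIoc_of_le (by linarith : (0:ℝ) ≤ 2*x₁)] at h
    exact h.mono_set Set.Ioo_subset_Ioc_self
  have hlow_int : IntegrableOn
      (fun y => (1/(2*α)) * ((2*x₁^2)^(-α) - ((x₁ - y)^2)^(-α)))
      (Set.Ioo (0:ℝ) (2*x₁)) volume := by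
    apply Integrable.const_mul
    exact (integrableOn_const (by rw [Real.volume_Ioo]; exact ENNReal.ofReal_ne_top)).sub hIoo
  -- value of the lower bound integral
  have hval : ∫ y in Set.Ioo (0:ℝ) (2*x₁), (1/(2*α)) * ((2*x₁^2)^(-α) - ((x₁ - y)^2)^(-α))
      = -(1 / α) * (1 / (1 - 2 * α) - 2 ^ (-α)) * x₁ ^ (1 - 2 * α) := by
    rw [← MeasureTheory.integral_Ioc_eq_integral_Ioo,
      ← intervalIntegral.integral_of_le (by linarith : (0:ℝ) ≤ 2*x₁),
      intervalIntegral.integral_const_mul,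
      intervalIntegral.integral_sub intervalIntegrable_const hII,
      intervalIntegral.integral_const, houter]
    have hA : (2*x₁^2 : ℝ)^(-α) = 2^(-α) * x₁^(-(2*α)) := by
      rw [Real.mul_rpow (by norm_num) (sq_nonneg x₁), even_sq_rpow, abs_of_pos hx₁]
    have hB : x₁ ^ (1-2*α) = x₁ * x₁^(-(2*α)) := by
      rw [show (1-2*α : ℝ) = 1 + (-(2*α)) by ring, Real.rpow_add hx₁, Real.rpow_one]
    rw [hA, hB, smul_eq_mul]
    have hα' : α ≠ 0 := hα0.ne'
    have h1α : (1-2*α : ℝ) ≠ 0 := by linarith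
    field_simp
    ring
  -- go to iterated integral
  rw [Measure.volume_eq_prod] at hint ⊢
  rw [MeasureTheory.setIntegral_prod _ hint]
  -- integrability of the inner integral function
  have hinner_int : IntegrableOn
      (fun y₁ => ∫ y₂ in Set.Ioo (0:ℝ) x₂,
        (y₂ - x₂) / (((x₁ - y₁) ^ 2 + (x₂ - y₂) ^ 2) ^ (1 + α)))
      (Set.Ioo (0:ℝ) (2*x₁)) volume := by
    have hint' : Integrable
        (fun y : ℝ×ℝ => (y.2 - x₂) / (((x₁ - y.1) ^ 2 + (x₂ - y.2) ^ 2) ^ (1 + α)))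
        ((volume.restrict (Set.Ioo (0:ℝ) (2*x₁))).prod (volume.restrict (Set.Ioo (0:ℝ) x₂))) := by
      rw [Measure.prod_restrict]
      exact hint
    exact hint'.integral_prod_left
  -- a.e. lower bound
  have hle : (fun y₁ => (1/(2*α)) * ((2*x₁^2)^(-α) - ((x₁ - y₁)^2)^(-α)))
      ≤ᵐ[volume.restrict (Set.Ioo (0:ℝ) (2*x₁))]
      (fun y₁ => ∫ y₂ in Set.Ioo (0:ℝ) x₂,
        (y₂ - x₂) / (((x₁ - y₁) ^ 2 + (x₂ - y₂) ^ 2) ^ (1 + α))) := by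
    have hne : ∀ᵐ y ∂(volume.restrict (Set.Ioo (0:ℝ) (2*x₁))), y ≠ x₁ := by
      refine ae_restrict_of_ae ?_
      have hs : {a : ℝ | ¬ a ≠ x₁} = {x₁} := by ext a; simp
      rw [ae_iff, hs]
      exact measure_singleton x₁
    filter_upwards [hne, ae_restrict_mem measurableSet_Ioo] with y hy hmem
    have ha : x₁ - y ≠ 0 := sub_ne_zero.mpr (Ne.symm hy)
    rw [bad_inner α (x₁ - y) x₂ hα0 ha hx₂]
    have hbase : (0:ℝ) < (x₁ - y)^2 + x₂^2 := by positivity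
    have hle2 : ((x₁ - y)^2 + x₂^2) ≤ 2 * x₁^2 := by
      nlinarith [hmem.1, hmem.2]
    have hmono := Real.rpow_le_rpow_of_nonpos hbase hle2 (by linarith : -α ≤ 0)
    have : (2*x₁^2 : ℝ)^(-α) - ((x₁ - y)^2)^(-α)
        ≤ ((x₁ - y)^2 + x₂^2)^(-α) - ((x₁ - y)^2)^(-α) := by linarith
    exact mul_le_mul_of_nonneg_left this (by positivity)
  exact le_trans (le_of_eq hval.symm) (integral_mono_ae hlow_int hinner_int hle)
end

section
/- For α ∈ (0, 1/2) and x₁ > 0, the integral over A₁ = {y : y₂ ∈ (0,1), y₁ ∈ (x₁ + y₂, 3x₁ + y₂)} of y₂/((y₁−x₁)² + y₂²)^{1+α} dy₁ dy₂, evaluated at base point x = (x₁, 0), is at least (1/(6·20^α·α))·x₁^{1−2α}, provided x₁ is smaller than a constant δ_α depending only on α. -/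
open Real MeasureTheory

lemma slice_lintegral (F : ℝ × ℝ → ENNReal) (hF : Measurable F) (c d : ℝ) (u v : ℝ → ℝ)
    (hu : Measurable u) (hv : Measurable v) :
    ∫⁻ y in {y : ℝ × ℝ | y.2 ∈ Set.Ioo c d ∧ y.1 ∈ Set.Ioo (u y.2) (v y.2)}, F y
      = ∫⁻ b in Set.Ioo c d, ∫⁻ a in Set.Ioo (u b) (v b), F (a, b) := by
  have hA : MeasurableSet {y : ℝ × ℝ | y.2 ∈ Set.Ioo c d ∧ y.1 ∈ Set.Ioo (u y.2) (v y.2)} := by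
    apply MeasurableSet.inter
    · exact measurable_snd (measurableSet_Ioo (a := c) (b := d))
    · exact MeasurableSet.inter
        (measurableSet_lt (hu.comp measurable_snd) measurable_fst)
        (measurableSet_lt measurable_fst (hv.comp measurable_snd))
  rw [← lintegral_indicator hA F]
  rw [MeasureTheory.Measure.volume_eq_prod, lintegral_prod_symm _ ((hF.indicator hA).aemeasurable)]
  rw [← lintegral_indicator measurableSet_Ioo]
  congr 1
  funext b
  by_cases hb : b ∈ Set.Ioo c d
  · rw [Set.indicator_of_mem hb, ← lintegral_indicator measurableSet_Ioo]
    congr 1; funext a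
    by_cases ha : a ∈ Set.Ioo (u b) (v b)
    · rw [Set.indicator_of_mem ha, Set.indicator_of_mem (by exact ⟨hb, ha⟩)]
    · rw [Set.indicator_of_notMem ha, Set.indicator_of_notMem (fun h => ha h.2)]
  · rw [Set.indicator_of_notMem hb]
    have : ∀ a, Set.indicator {y : ℝ × ℝ | y.2 ∈ Set.Ioo c d ∧ y.1 ∈ Set.Ioo (u y.2) (v y.2)} F (a, b) = 0 := by
      intro a; apply Set.indicator_of_notMem; intro h; exact hb h.1
    simp only [Set.mem_Ioo] at this
    simp only [Set.mem_Ioo]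
    rw [funext (fun x => this x)]
    simp

theorem good_part_integral_lower_bound (α : ℝ) (hα : α ∈ Set.Ioo (0:ℝ) (1/2)) :
    ∃ δ > (0:ℝ), ∀ x₁ : ℝ, 0 < x₁ → x₁ < δ →
      (1 / (6 * 20 ^ α * α)) * x₁ ^ (1 - 2 * α) ≤
        ∫ y in {y : ℝ × ℝ | y.2 ∈ Set.Ioo (0:ℝ) 1 ∧
            y.1 ∈ Set.Ioo (x₁ + y.2) (3 * x₁ + y.2)},
          y.2 / (((y.1 - x₁) ^ 2 + y.2 ^ 2) ^ (1 + α)) := by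
  obtain ⟨hα0, hα2⟩ := hα
  refine ⟨(6:ℝ) ^ (-(1/(2*α))) / 2, by positivity, ?_⟩
  intro x₁ hx hxδ
  set A : Set (ℝ × ℝ) := {y : ℝ × ℝ | y.2 ∈ Set.Ioo (0:ℝ) 1 ∧
      y.1 ∈ Set.Ioo (x₁ + y.2) (3 * x₁ + y.2)} with hAdef
  set f : ℝ × ℝ → ℝ := fun y => y.2 / (((y.1 - x₁) ^ 2 + y.2 ^ 2) ^ (1 + α)) with hfdef
  have hfm : Measurable f := by fun_prop
  have h2x1 : 2 * x₁ < 1 := by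
    have h6 : (6:ℝ) ^ (-(1/(2*α))) ≤ 1 := by
      apply Real.rpow_le_one_of_one_le_of_nonpos (by norm_num)
      have : 0 < 1/(2*α) := by positivity
      linarith
    linarith
  have hfpos : ∀ y : ℝ × ℝ, 0 < y.2 → 0 ≤ f y := by
    intro y hy
    have hbase : (0:ℝ) < (y.1 - x₁) ^ 2 + y.2 ^ 2 := by positivity
    positivity
  have hFm : Measurable fun y => ENNReal.ofReal (f y) := hfm.ennreal_ofReal
  -- slice A
  have hsliceA : ∫⁻ y in A, ENNReal.ofReal (f y)
      = ∫⁻ b in Set.Ioo (0:ℝ) 1, ∫⁻ a in Set.Ioo (x₁ + b) (3 * x₁ + b),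
          ENNReal.ofReal (f (a, b)) :=
    slice_lintegral _ hFm 0 1 (fun b => x₁ + b) (fun b => 3 * x₁ + b)
      (by fun_prop) (by fun_prop)
  -- inner upper bound
  have hinner : ∀ b ∈ Set.Ioo (0:ℝ) 1,
      ∫⁻ a in Set.Ioo (x₁ + b) (3 * x₁ + b), ENNReal.ofReal (f (a, b))
        ≤ ENNReal.ofReal (b ^ (-(2*α))) := by
    intro b hb
    obtain ⟨hb0, hb1⟩ := hb
    have hcont : ContinuousOn (fun a : ℝ => b * (a - x₁) ^ (-(2+2*α)))
        (Set.Icc (x₁+b) (3*x₁+b)) := by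
      apply ContinuousOn.mul continuousOn_const
      apply ContinuousOn.rpow_const ((continuous_id.sub continuous_const).continuousOn)
      intro a ha
      left
      have : x₁ + b ≤ a := ha.1
      have h0 : 0 < a - x₁ := by linarith
      exact ne_of_gt h0
    have hInt : IntegrableOn (fun a : ℝ => b * (a - x₁) ^ (-(2+2*α)))
        (Set.Ioo (x₁+b) (3*x₁+b)) :=
      (hcont.integrableOn_Icc).mono_set Set.Ioo_subset_Icc_self
    have hnn : 0 ≤ᵐ[volume.restrict (Set.Ioo (x₁+b) (3*x₁+b))]
        fun a : ℝ => b * (a - x₁) ^ (-(2+2*α)) := by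
      apply ae_restrict_of_forall_mem measurableSet_Ioo
      intro a ha
      have : 0 < a - x₁ := by have := ha.1; linarith
      exact mul_nonneg hb0.le (Real.rpow_nonneg this.le _)
    have hptwise : ∀ a ∈ Set.Ioo (x₁+b) (3*x₁+b),
        ENNReal.ofReal (f (a, b)) ≤ ENNReal.ofReal (b * (a - x₁) ^ (-(2+2*α))) := by
      intro a ha
      apply ENNReal.ofReal_le_ofReal
      have ha1 : x₁ + b < a := ha.1
      have h0 : 0 < a - x₁ := by linarith
      have hD : (a - x₁) ^ ((2:ℝ)+2*α) ≤ ((a - x₁) ^ 2 + b ^ 2) ^ (1 + α) := by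
        have h1 : (a - x₁) ^ ((2:ℝ)+2*α) = ((a - x₁) ^ (2:ℕ)) ^ (1+α) := by
          rw [← Real.rpow_natCast (a - x₁) 2, ← Real.rpow_mul h0.le]
          norm_num
          ring_nf
        rw [h1]
        apply Real.rpow_le_rpow (by positivity) (by nlinarith) (by linarith)
      have hrw : b * (a - x₁) ^ (-(2+2*α)) = b / (a - x₁) ^ ((2:ℝ)+2*α) := by
        rw [Real.rpow_neg h0.le, div_eq_mul_inv]
      rw [hfdef, hrw]
      have hDpos : (0:ℝ) < (a - x₁) ^ ((2:ℝ)+2*α) := Real.rpow_pos_of_pos h0 _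
      exact div_le_div_of_nonneg_left hb0.le hDpos hD
    calc ∫⁻ a in Set.Ioo (x₁+b) (3*x₁+b), ENNReal.ofReal (f (a, b))
        ≤ ∫⁻ a in Set.Ioo (x₁+b) (3*x₁+b), ENNReal.ofReal (b * (a - x₁) ^ (-(2+2*α))) :=
          setLIntegral_mono (by fun_prop) hptwise
      _ = ENNReal.ofReal (∫ a in Set.Ioo (x₁+b) (3*x₁+b), b * (a - x₁) ^ (-(2+2*α))) :=
          (ofReal_integral_eq_lintegral_ofReal hInt hnn).symm
      _ ≤ ENNReal.ofReal (b ^ (-(2*α))) := by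
          apply ENNReal.ofReal_le_ofReal
          rw [MeasureTheory.integral_const_mul]
          have h1 : ∫ a in Set.Ioo (x₁+b) (3*x₁+b), (a - x₁) ^ (-(2+2*α))
              = ∫ a in (x₁+b)..(3*x₁+b), (a - x₁) ^ (-(2+2*α)) := by
            rw [intervalIntegral.integral_of_le (by linarith), integral_Ioc_eq_integral_Ioo]
          have h2 : ∫ a in (x₁+b)..(3*x₁+b), (a - x₁) ^ (-(2+2*α))
              = ∫ t in b..(2*x₁+b), t ^ (-(2+2*α)) := by
            rw [intervalIntegral.integral_comp_sub_right (fun t => t ^ (-(2+2*α))) x₁]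
            congr 1 <;> ring
          have h3 : ∫ t in b..(2*x₁+b), t ^ (-(2+2*α))
              = ((2*x₁+b) ^ (-(2+2*α)+1) - b ^ (-(2+2*α)+1)) / (-(2+2*α)+1) := by
            apply integral_rpow
            right
            constructor
            · intro h; nlinarith [h]
            · apply Set.notMem_uIcc_of_lt <;> linarith
          rw [h1, h2, h3]
          have he : -(2+2*α)+1 = -(1+2*α) := by ring
          rw [he]
          set X := b ^ (-(1+2*α)) with hX
          set Y := (2*x₁+b) ^ (-(1+2*α)) with hY
          have hXnn : 0 ≤ X := Real.rpow_nonneg hb0.le _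
          have hYnn : 0 ≤ Y := Real.rpow_nonneg (by linarith) _
          have hbX : b * X = b ^ (-(2*α)) := by
            rw [hX, show -(2*α) = 1 + (-(1+2*α)) by ring, Real.rpow_add hb0, Real.rpow_one]
          have hdiv : (Y - X) / (-(1+2*α)) ≤ X := by
            rw [div_neg, ← neg_div, neg_sub]
            calc (X - Y) / (1+2*α) ≤ X / (1+2*α) := by
                  gcongr
                  linarith
              _ ≤ X := by
                  apply div_le_self hXnn
                  linarith
          calc b * ((Y - X) / (-(1+2*α))) ≤ b * X :=
                mul_le_mul_of_nonneg_left hdiv hb0.le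
            _ = b ^ (-(2*α)) := hbX
  -- finiteness
  have hfin : ∫⁻ y in A, ENNReal.ofReal (f y) < ⊤ := by
    rw [hsliceA]
    calc ∫⁻ b in Set.Ioo (0:ℝ) 1, ∫⁻ a in Set.Ioo (x₁ + b) (3 * x₁ + b),
          ENNReal.ofReal (f (a, b))
        ≤ ∫⁻ b in Set.Ioo (0:ℝ) 1, ENNReal.ofReal (b ^ (-(2*α))) :=
          setLIntegral_mono (by fun_prop) hinner
      _ < ⊤ := by
          have hInt : IntegrableOn (fun b : ℝ => b ^ (-(2*α))) (Set.Ioo 0 1) := by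
            have := (intervalIntegral.intervalIntegrable_rpow'
              (show (-1:ℝ) < -(2*α) by linarith) (a := 0) (b := 1))
            rw [intervalIntegrable_iff_integrableOn_Ioo_of_le (by norm_num)] at this
            exact this
          calc ∫⁻ b in Set.Ioo (0:ℝ) 1, ENNReal.ofReal (b ^ (-(2*α)))
              ≤ ∫⁻ b in Set.Ioo (0:ℝ) 1, (‖(fun b : ℝ => b ^ (-(2*α))) b‖₊ : ENNReal) := by
                apply lintegral_mono
                intro b
                show ENNReal.ofReal (b ^ (-(2*α))) ≤ (‖b ^ (-(2*α))‖₊ : ENNReal)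
                rw [← enorm_eq_nnnorm, ← ofReal_norm]
                exact ENNReal.ofReal_le_ofReal (le_abs_self _)
            _ < ⊤ := hInt.2
  -- set S
  set S : Set (ℝ × ℝ) := {y : ℝ × ℝ | y.2 ∈ Set.Ioo (2*x₁) 1 ∧
      y.1 ∈ Set.Ioo (x₁ + y.2) (3 * x₁ + y.2)} with hSdef
  have hSA : S ⊆ A := by
    intro y hy
    exact ⟨⟨by have := hy.1.1; linarith, hy.1.2⟩, hy.2⟩
  -- lower bound on S
  have hlowS : ∫⁻ y in S, ENNReal.ofReal (y.2 ^ (-(1+2*α)) / 5 ^ (1+α))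
      ≤ ∫⁻ y in S, ENNReal.ofReal (f y) := by
    apply setLIntegral_mono (hfm.ennreal_ofReal)
    intro y hy
    rw [hSdef] at hy
    obtain ⟨⟨hb2, hb1⟩, ha1, ha2⟩ := hy
    set a := y.1
    set b := y.2
    have hb0 : 0 < b := by linarith
    apply ENNReal.ofReal_le_ofReal
    have hax : b < a - x₁ := by simp only [a, b] at *; linarith
    have hax2 : a - x₁ < 2*b := by simp only [a, b] at *; linarith
    have hD : ((a - x₁) ^ 2 + b ^ 2) ^ (1+α) ≤ 5 ^ (1+α) * b ^ ((2:ℝ)+2*α) := by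
      have h5 : ((5:ℝ) * b ^ (2:ℕ)) ^ (1+α) = 5 ^ (1+α) * b ^ ((2:ℝ)+2*α) := by
        rw [Real.mul_rpow (by norm_num) (by positivity)]
        congr 1
        rw [← Real.rpow_natCast b 2, ← Real.rpow_mul hb0.le]
        norm_num; ring_nf
      rw [← h5]
      apply Real.rpow_le_rpow (by positivity) (by nlinarith) (by linarith)
    have hkey : b ^ (-(1+2*α)) / 5 ^ (1+α) = b / (5 ^ (1+α) * b ^ ((2:ℝ)+2*α)) := by
      rw [show -(1+2*α) = 1 - ((2:ℝ)+2*α) by ring, Real.rpow_sub hb0, Real.rpow_one,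
        div_div, mul_comm]
    rw [hfdef, hkey]
    have hDpos : (0:ℝ) < ((a - x₁) ^ 2 + b ^ 2) ^ (1+α) := by
      apply Real.rpow_pos_of_pos; positivity
    exact div_le_div_of_nonneg_left hb0.le hDpos hD
  -- compute integral over S
  have hcompS : ENNReal.ofReal ((1/(6 * 20 ^ α * α)) * x₁ ^ (1 - 2*α))
      ≤ ∫⁻ y in S, ENNReal.ofReal (y.2 ^ (-(1+2*α)) / 5 ^ (1+α)) := by
    have hslice : ∫⁻ y in S, ENNReal.ofReal (y.2 ^ (-(1+2*α)) / 5 ^ (1+α))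
        = ∫⁻ b in Set.Ioo (2*x₁) 1, ∫⁻ a in Set.Ioo (x₁ + b) (3*x₁ + b),
            ENNReal.ofReal (b ^ (-(1+2*α)) / 5 ^ (1+α)) := by
      rw [hSdef]
      exact slice_lintegral (fun y => ENNReal.ofReal (y.2 ^ (-(1+2*α)) / 5 ^ (1+α)))
        (by fun_prop) (2*x₁) 1 (fun b => x₁ + b) (fun b => 3*x₁ + b) (by fun_prop) (by fun_prop)
    rw [hslice]
    have hstep : ∫⁻ b in Set.Ioo (2*x₁) 1, ∫⁻ a in Set.Ioo (x₁ + b) (3*x₁ + b),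
            ENNReal.ofReal (b ^ (-(1+2*α)) / 5 ^ (1+α))
        = ∫⁻ b in Set.Ioo (2*x₁) 1,
            ENNReal.ofReal (b ^ (-(1+2*α)) / 5 ^ (1+α) * (2*x₁)) := by
      apply setLIntegral_congr_fun_ae measurableSet_Ioo
      apply ae_of_all
      intro b hb
      rw [setLIntegral_const, Real.volume_Ioo, show 3*x₁+b-(x₁+b) = 2*x₁ by ring,
        ← ENNReal.ofReal_mul]
      have hb0 : 0 < b := lt_trans (by positivity) hb.1
      positivity
    rw [hstep]
    have hInt : IntegrableOn (fun b : ℝ => b ^ (-(1+2*α)) / 5 ^ (1+α) * (2*x₁))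
        (Set.Ioo (2*x₁) 1) := by
      have hcont : ContinuousOn (fun b : ℝ => b ^ (-(1+2*α)) / 5 ^ (1+α) * (2*x₁))
          (Set.Icc (2*x₁) 1) := by
        apply ContinuousOn.mul _ continuousOn_const
        apply ContinuousOn.div _ continuousOn_const (fun b _ => by positivity)
        apply ContinuousOn.rpow_const continuousOn_id
        intro b hb
        left
        have : 2*x₁ ≤ b := hb.1
        have hb0 : 0 < b := by linarith [mul_pos two_pos hx]
        exact ne_of_gt hb0
      exact (hcont.integrableOn_Icc).mono_set Set.Ioo_subset_Icc_self
    have hnn : 0 ≤ᵐ[volume.restrict (Set.Ioo (2*x₁) 1)]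
        fun b : ℝ => b ^ (-(1+2*α)) / 5 ^ (1+α) * (2*x₁) := by
      apply ae_restrict_of_forall_mem measurableSet_Ioo
      intro b hb
      have hb0 : 0 < b := lt_trans (by positivity) hb.1
      positivity
    rw [← ofReal_integral_eq_lintegral_ofReal hInt hnn]
    apply ENNReal.ofReal_le_ofReal
    have hval : ∫ b in Set.Ioo (2*x₁) 1, b ^ (-(1+2*α)) / 5 ^ (1+α) * (2*x₁)
        = (2*x₁ / 5 ^ (1+α)) * (((1:ℝ) ^ (-(1+2*α)+1) - (2*x₁) ^ (-(1+2*α)+1)) / (-(1+2*α)+1)) := by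
      have h0 : (fun b : ℝ => b ^ (-(1+2*α)) / 5 ^ (1+α) * (2*x₁))
          = fun b : ℝ => (2*x₁ / 5 ^ (1+α)) * b ^ (-(1+2*α)) := by
        funext b; ring
      rw [h0, MeasureTheory.integral_const_mul]
      congr 1
      rw [← integral_Ioc_eq_integral_Ioo, ← intervalIntegral.integral_of_le (by linarith)]
      apply integral_rpow
      right
      refine ⟨by intro h; nlinarith, ?_⟩
      apply Set.notMem_uIcc_of_lt <;> linarith [mul_pos two_pos hx]
    rw [hval]
    -- final arithmetic
    have he : -(1+2*α)+1 = -(2*α) := by ring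
    rw [he, Real.one_rpow]
    have hapos : 0 < x₁ ^ (2*α) := Real.rpow_pos_of_pos hx _
    have hb2pos : (0:ℝ) < (2:ℝ) ^ (2*α) := Real.rpow_pos_of_pos two_pos _
    have hp5pos : (0:ℝ) < (5:ℝ) ^ α := Real.rpow_pos_of_pos (by norm_num) _
    set a := x₁ ^ (2*α) with ha
    set b2 := (2:ℝ) ^ (2*α) with hb2
    set p5 := (5:ℝ) ^ α with hp5
    have h2x : (2*x₁) ^ (-(2*α)) = (b2*a)⁻¹ := by
      rw [Real.rpow_neg (by positivity), Real.mul_rpow (by norm_num) hx.le]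
    have h20 : (20:ℝ) ^ α = b2 * p5 := by
      rw [hb2, hp5, show (2:ℝ)^(2*α) = ((2:ℝ)^(2:ℕ))^α from by
        rw [← Real.rpow_natCast (2:ℝ) 2, ← Real.rpow_mul (by norm_num)]; norm_num,
        ← Real.mul_rpow (by positivity) (by norm_num)]
      norm_num
    have h51 : (5:ℝ) ^ (1+α) = 5 * p5 := by
      rw [Real.rpow_add (by norm_num), Real.rpow_one]
    have hx1 : x₁ ^ (1-2*α) = x₁ / a := by
      rw [ha, Real.rpow_sub hx, Real.rpow_one]
    have hT : b2 * a < 1/6 := by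
      have h1 : 2*x₁ < (6:ℝ) ^ (-(1/(2*α))) := by linarith
      have h2 := Real.rpow_lt_rpow (by positivity) h1 (by positivity : (0:ℝ) < 2*α)
      rw [← Real.rpow_mul (by norm_num : (0:ℝ) ≤ 6)] at h2
      have he2 : -(1/(2*α))*(2*α) = -1 := by field_simp
      rw [he2, Real.rpow_neg_one] at h2
      have h3 : (2*x₁) ^ (2*α) = b2 * a := by
        rw [ha, hb2, ← Real.mul_rpow (by norm_num) hx.le]
      rw [h3] at h2
      linarith [h2]
    rw [h2x, h20, h51, hx1, div_neg, ← neg_div, neg_sub]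
    have hba : 0 < b2 * a := by positivity
    have hkey : 5 * x₁ ≤ 6 * x₁ * (1 - b2*a) := by nlinarith
    have hinv : (b2*a)⁻¹ - 1 = (1 - b2*a)/(b2*a) := by field_simp
    rw [hinv]
    rw [show (2 * x₁ / (5 * p5) * ((1 - b2 * a) / (b2 * a) / (2 * α)))
        = (2 * x₁ * (1 - b2 * a)) / ((5 * p5) * (b2 * a) * (2 * α)) from by ring]
    rw [show (1 / (6 * (b2 * p5) * α) * (x₁ / a)) = x₁ / (a * (6 * (b2 * p5) * α)) from by ring]
    rw [div_le_div_iff₀ (by positivity) (by positivity)]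
    have h1mba : 0 < 1 - b2*a := by linarith
    nlinarith [mul_pos hp5pos hα0, mul_pos (mul_pos hp5pos hα0) hapos,
      mul_pos hb2pos hapos, mul_nonneg (mul_nonneg hp5pos.le hα0.le) (mul_nonneg hapos.le hb2pos.le),
      mul_le_mul_of_nonneg_right hkey (mul_nonneg (mul_nonneg hp5pos.le hα0.le) (mul_nonneg hapos.le hb2pos.le))]
  -- assemble
  have hA : MeasurableSet A := by
    apply MeasurableSet.inter
    · exact measurable_snd (measurableSet_Ioo (a := (0:ℝ)) (b := 1))
    · exact MeasurableSet.inter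
        (measurableSet_lt (by fun_prop) measurable_fst)
        (measurableSet_lt measurable_fst (by fun_prop))
  have hint : ∫ y in A, f y = (∫⁻ y in A, ENNReal.ofReal (f y)).toReal := by
    apply integral_eq_lintegral_of_nonneg_ae
    · exact ae_restrict_of_forall_mem hA fun y hy => hfpos y hy.1.1
    · exact hfm.aestronglyMeasurable
  rw [show (∫ y in A, y.2 / (((y.1 - x₁) ^ 2 + y.2 ^ 2) ^ (1 + α))) = ∫ y in A, f y from rfl,
    hint]
  have hchain : ENNReal.ofReal ((1/(6 * 20 ^ α * α)) * x₁ ^ (1 - 2*α))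
      ≤ ∫⁻ y in A, ENNReal.ofReal (f y) :=
    le_trans hcompS (le_trans hlowS (lintegral_mono_set hSA))
  have hfinal := ENNReal.toReal_mono hfin.ne hchain
  rwa [ENNReal.toReal_ofReal (by positivity)] at hfinal
end
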